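/- arXiv:1912.10136 — 2 statements merged into one kernel-verified Lean document; each statement's English description precedes it below -/
import Mathlib

section
/- Let S be a set, ψ : S → ℝ and f : S → ℝ bounded functions, and (Y_k)_{k=1}^K symmetric real random variables (jointly: the random vector (Y_1,...,Y_K) has the same law as (-Y_1,...,-Y_K)), and φ : S → ℝ^K. Assume that for all s, s' ∈ S, ψ(s) - ψ(s') ≤ E|∑_{k=1}^K Y_k(φ(s)_k - φ(s')_k)|. Then E[sup_{s∈S} (ε ψ(s) + f(s))] ≤ E[sup_{s∈S} (∑_{k=1}^K Y_k φ(s)_k + f(s))], where ε is a Rademacher random variable (uniform on {-1,+1}) independent of (Y_k), and all suprema are assumed finite and measurable. -/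
open MeasureTheory ProbabilityTheory

/-- One-step contraction lemma: if `ψ(s) - ψ(s') ≤ E|∑ k, Y k (φ s k - φ s' k)|` for all
`s, s'`, with `(Y k)` jointly symmetric and `ε` an independent Rademacher variable, then
`E sup_s (ε ψ(s) + f(s)) ≤ E sup_s (∑ k, Y k φ(s) k + f(s))`. -/
theorem stmt5
    {Ω : Type*} [MeasurableSpace Ω] (μ : Measure Ω) [IsProbabilityMeasure μ]
    {S : Type*} [Nonempty S] (ψ f : S → ℝ)
    (hψ : ∃ C : ℝ, ∀ s, |ψ s| ≤ C) (hf : ∃ C : ℝ, ∀ s, |f s| ≤ C)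
    (K : ℕ) (Y : Fin K → Ω → ℝ) (hYmeas : ∀ k, Measurable (Y k))
    -- joint symmetry: `(Y 1, …, Y K)` has the same law as `(-Y 1, …, -Y K)`
    (hsymm : Measure.map (fun ω (k : Fin K) => Y k ω) μ
        = Measure.map (fun ω (k : Fin K) => -(Y k ω)) μ)
    (φ : S → Fin K → ℝ)
    (ε : Ω → ℝ) (hεmeas : Measurable ε)
    -- `ε` is a Rademacher variable
    (hε1 : μ {ω | ε ω = 1} = 1 / 2) (hε2 : μ {ω | ε ω = -1} = 1 / 2)
    -- independent of `(Y k)`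
    (hindep : IndepFun ε (fun ω (k : Fin K) => Y k ω) μ)
    -- the Lipschitz-type domination hypothesis
    (hlip : ∀ s s' : S, ψ s - ψ s' ≤ ∫ ω, |∑ k, Y k ω * (φ s k - φ s' k)| ∂μ)
    -- the suprema are finite and the integrands are integrable
    (hbdd1 : ∀ ω, BddAbove (Set.range fun s => ε ω * ψ s + f s))
    (hbdd2 : ∀ ω, BddAbove (Set.range fun s => (∑ k, Y k ω * φ s k) + f s))
    (hint1 : Integrable (fun ω => ⨆ s, (ε ω * ψ s + f s)) μ)
    (hint2 : Integrable (fun ω => ⨆ s, ((∑ k, Y k ω * φ s k) + f s)) μ) :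
    ∫ ω, (⨆ s, (ε ω * ψ s + f s)) ∂μ
      ≤ ∫ ω, (⨆ s, ((∑ k, Y k ω * φ s k) + f s)) ∂μ := by
  obtain ⟨Cψ, hCψ⟩ := hψ
  obtain ⟨Cf, hCf⟩ := hf
  set Yv : Ω → (Fin K → ℝ) := fun ω k => Y k ω with hYv
  set Zv : Ω → (Fin K → ℝ) := fun ω k => -(Y k ω) with hZv
  have hYvm : Measurable Yv := measurable_pi_lambda _ fun k => hYmeas k
  have hZvm : Measurable Zv := measurable_pi_lambda _ fun k => (hYmeas k).neg
  set G : (Fin K → ℝ) → ℝ := fun v => ⨆ s, ((∑ k, v k * φ s k) + f s) with hG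
  -- the set of `v` where the sup is attained as a genuine bounded sup
  set B : Set (Fin K → ℝ) :=
      {v | BddAbove (Set.range fun s => (∑ k, v k * φ s k) + f s)} with hB
  have hcont : ∀ s : S, Continuous fun v : Fin K → ℝ => (∑ k, v k * φ s k) + f s := by
    intro s
    exact (continuous_finset_sum _ fun k _ =>
      (continuous_apply k).mul continuous_const).add continuous_const
  have hBmeas : MeasurableSet B := by
    have : B = ⋃ n : ℕ, ⋂ s : S, {v | (∑ k, v k * φ s k) + f s ≤ n} := by
      ext v
      simp only [hB, Set.mem_setOf_eq, Set.mem_iUnion, Set.mem_iInter]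
      constructor
      · rintro ⟨C, hC⟩
        obtain ⟨n, hn⟩ := exists_nat_ge C
        exact ⟨n, fun s => le_trans (hC (Set.mem_range_self s)) hn⟩
      · rintro ⟨n, hn⟩
        exact ⟨n, by rintro x ⟨s, rfl⟩; exact hn s⟩
    rw [this]
    exact MeasurableSet.iUnion fun n =>
      (isClosed_iInter fun s => isClosed_le (hcont s) continuous_const).measurableSet
  -- G is measurable
  have hGmeas : Measurable G := by
    apply measurable_of_Iic
    intro c
    have : G ⁻¹' Set.Iic c =
        (Bᶜ ∩ {v | (0:ℝ) ≤ c}) ∪ (B ∩ ⋂ s, {v | (∑ k, v k * φ s k) + f s ≤ c}) := by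
      ext v
      simp only [Set.mem_preimage, Set.mem_Iic, Set.mem_union, Set.mem_inter_iff,
        Set.mem_compl_iff, Set.mem_setOf_eq, Set.mem_iInter]
      by_cases hv : v ∈ B
      · constructor
        · intro hGc
          exact Or.inr ⟨hv, fun s => (ciSup_le_iff hv).1 hGc s⟩
        · rintro (⟨hnv, _⟩ | ⟨_, hall⟩)
          · exact absurd hv hnv
          · exact ciSup_le hall
      · have h0 : G v = 0 := Real.iSup_of_not_bddAbove hv
        constructor
        · intro hGc
          rw [h0] at hGc
          exact Or.inl ⟨hv, hGc⟩
        · rintro (⟨_, hc⟩ | ⟨hvB, _⟩)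
          · rw [h0]; exact hc
          · exact absurd hvB hv
    rw [this]
    refine ((hBmeas.compl.inter ?_).union (hBmeas.inter
      (isClosed_iInter fun s => isClosed_le (hcont s) continuous_const).measurableSet))
    by_cases h0 : (0:ℝ) ≤ c
    · have : {v : Fin K → ℝ | (0:ℝ) ≤ c} = Set.univ := by ext v; simp [h0]
      rw [this]; exact MeasurableSet.univ
    · have : {v : Fin K → ℝ | (0:ℝ) ≤ c} = ∅ := by ext v; simp [h0]
      rw [this]; exact MeasurableSet.empty
  -- transfer along the symmetry
  have hgY : (fun ω => ⨆ s, ((∑ k, Y k ω * φ s k) + f s)) = fun ω => G (Yv ω) := rfl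
  set h : Ω → ℝ := fun ω => G (Zv ω) with hh
  have hintG : Integrable G (Measure.map Yv μ) := by
    rw [integrable_map_measure (hGmeas.aestronglyMeasurable) hYvm.aemeasurable]
    exact hint2
  have hinth : Integrable h μ := by
    have h1 : Integrable G (Measure.map Zv μ) := hsymm ▸ hintG
    exact (integrable_map_measure (hGmeas.aestronglyMeasurable) hZvm.aemeasurable).1 h1
  have hinteq : ∫ ω, h ω ∂μ = ∫ ω, G (Yv ω) ∂μ := by
    rw [hh]
    rw [← integral_map hZvm.aemeasurable hGmeas.aestronglyMeasurable,
      ← hsymm, integral_map hYvm.aemeasurable hGmeas.aestronglyMeasurable]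
  -- a.e. the sup defining h is a bounded sup
  have hZB : ∀ᵐ ω ∂μ, Zv ω ∈ B := by
    have h2 : Measure.map Yv μ B = 1 := by
      rw [Measure.map_apply hYvm hBmeas]
      have : Yv ⁻¹' B = Set.univ := by
        ext ω; simp only [Set.mem_preimage, Set.mem_univ, iff_true]; exact hbdd2 ω
      rw [this]; simp
    have h3 : Measure.map Zv μ B = 1 := by rw [← hsymm]; exact h2
    have h4 : μ (Zv ⁻¹' B) = 1 := by rwa [Measure.map_apply hZvm hBmeas] at h3
    rw [ae_iff]
    have : {ω | ¬ Zv ω ∈ B} = (Zv ⁻¹' B)ᶜ := rfl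
    rw [this, prob_compl_eq_zero_iff (hZvm hBmeas)]
    exact h4
  -- key inequality for each pair s, s'
  have key : ∀ s s' : S, ψ s - ψ s' + f s + f s'
      ≤ (∫ ω, G (Yv ω) ∂μ) + ∫ ω, h ω ∂μ := by
    intro s s'
    set A : Ω → ℝ := fun ω => ∑ k, Y k ω * (φ s k - φ s' k) with hA
    have hAm : Measurable A := Finset.measurable_sum _ fun k _ => (hYmeas k).mul_const _
    have hptwise : ∀ᵐ ω ∂μ, |A ω| + f s + f s' ≤ G (Yv ω) + h ω := by
      filter_upwards [hZB] with ω hω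
      have hb1 : BddAbove (Set.range fun u => (∑ k, Yv ω k * φ u k) + f u) := hbdd2 ω
      have hb2 : BddAbove (Set.range fun u => (∑ k, Zv ω k * φ u k) + f u) := hω
      have e1 : ∀ u, (∑ k, Y k ω * φ u k) + f u ≤ G (Yv ω) := fun u => le_ciSup hb1 u
      have e2 : ∀ u, (∑ k, -(Y k ω) * φ u k) + f u ≤ h ω := fun u => le_ciSup hb2 u
      have hsplit : A ω = (∑ k, Y k ω * φ s k) - (∑ k, Y k ω * φ s' k) := by
        rw [hA, ← Finset.sum_sub_distrib]
        exact Finset.sum_congr rfl fun k _ => by ring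
      have hneg : ∀ u, (∑ k, -(Y k ω) * φ u k) = -(∑ k, Y k ω * φ u k) := by
        intro u
        rw [← Finset.sum_neg_distrib]
        exact Finset.sum_congr rfl fun k _ => by ring
      have h1 := e1 s
      have h2 := e2 s'
      have h3 := e1 s'
      have h4 := e2 s
      rw [hneg s'] at h2
      rw [hneg s] at h4
      have habs : |A ω| ≤ G (Yv ω) + h ω - f s - f s' := by
        rw [abs_le]
        constructor
        · rw [hsplit]; linarith
        · rw [hsplit]; linarith
      linarith
    have hdom : Integrable (fun ω => G (Yv ω) + h ω) μ := hint2.add hinth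
    have hdom' : Integrable (fun ω => G (Yv ω) + h ω - (f s + f s')) μ :=
      hdom.sub (integrable_const (f s + f s'))
    have hintA : Integrable (fun ω => |A ω|) μ := by
      refine Integrable.mono' hdom' hAm.abs.aestronglyMeasurable ?_
      filter_upwards [hptwise] with ω hω
      rw [Real.norm_eq_abs, abs_abs]
      linarith
    have hstep : ∫ ω, |A ω| ∂μ ≤ (∫ ω, G (Yv ω) ∂μ) + (∫ ω, h ω ∂μ) - f s - f s' := by
      have h5 : ∫ ω, |A ω| ∂μ ≤ ∫ ω, (G (Yv ω) + h ω - (f s + f s')) ∂μ := by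
        apply integral_mono_ae hintA hdom'
        filter_upwards [hptwise] with ω hω
        linarith
      rw [integral_sub hdom (integrable_const _), integral_add hint2 hinth,
        integral_const] at h5
      simp only [probReal_univ, one_smul, smul_eq_mul, one_mul] at h5
      linarith
    have := hlip s s'
    linarith
  -- bounded sups over S
  have hbddψf : ∀ t : ℝ, BddAbove (Set.range fun s => t * ψ s + f s) := by
    intro t
    refine ⟨|t| * Cψ + Cf, ?_⟩
    rintro x ⟨s, rfl⟩
    have h1 : t * ψ s ≤ |t * ψ s| := le_abs_self _
    have h2 : |t * ψ s| = |t| * |ψ s| := abs_mul _ _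
    have h3 : |t| * |ψ s| ≤ |t| * Cψ := by
      apply mul_le_mul_of_nonneg_left (hCψ s) (abs_nonneg t)
    have h4 := (abs_le.mp (hCf s)).2
    simp only
    linarith
  set In : ℝ := ∫ ω, G (Yv ω) ∂μ with hIn
  have hsum : (⨆ s, ((1:ℝ) * ψ s + f s)) + (⨆ s, ((-1:ℝ) * ψ s + f s)) ≤ In + In := by
    have hIhsum : In + ∫ ω, h ω ∂μ = In + In := by rw [hinteq]
    have step1 : (⨆ s, ((1:ℝ) * ψ s + f s)) ≤ (In + In) - (⨆ s, ((-1:ℝ) * ψ s + f s)) := by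
      apply ciSup_le
      intro s
      have step2 : (⨆ s', ((-1:ℝ) * ψ s' + f s')) ≤ (In + In) - ((1:ℝ) * ψ s + f s) := by
        apply ciSup_le
        intro s'
        have hk := key s s'
        rw [← hinteq] at hIhsum
        have := hinteq
        nlinarith [key s s', hinteq]
      linarith
    linarith
  -- compute the LHS
  have hA1meas : MeasurableSet {ω | ε ω = 1} := by
    have : {ω | ε ω = 1} = ε ⁻¹' {1} := by ext ω; simp
    rw [this]; exact hεmeas (measurableSet_singleton 1)
  have hA2meas : MeasurableSet {ω | ε ω = -1} := by
    have : {ω | ε ω = -1} = ε ⁻¹' {-1} := by ext ω; simp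
    rw [this]; exact hεmeas (measurableSet_singleton (-1))
  have hdisj : Disjoint {ω | ε ω = 1} {ω | ε ω = -1} := by
    rw [Set.disjoint_left]
    rintro ω h1 h2
    simp only [Set.mem_setOf_eq] at h1 h2
    rw [h1] at h2
    norm_num at h2
  have hunion : μ ({ω | ε ω = 1} ∪ {ω | ε ω = -1}) = 1 := by
    rw [measure_union hdisj hA2meas, hε1, hε2]
    exact ENNReal.add_halves 1
  have hae : ∀ᵐ ω ∂μ, ε ω = 1 ∨ ε ω = -1 := by
    rw [ae_iff]
    have : {ω | ¬ (ε ω = 1 ∨ ε ω = -1)} = ({ω | ε ω = 1} ∪ {ω | ε ω = -1})ᶜ := by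
      ext ω; simp [not_or]
    rw [this, prob_compl_eq_zero_iff (hA1meas.union hA2meas)]
    exact hunion
  have hLHSfun : (fun ω => ⨆ s, (ε ω * ψ s + f s)) =ᵐ[μ]
      fun ω => Set.indicator {ω | ε ω = 1} (fun _ => ⨆ s, ((1:ℝ) * ψ s + f s)) ω
        + Set.indicator {ω | ε ω = -1} (fun _ => ⨆ s, ((-1:ℝ) * ψ s + f s)) ω := by
    filter_upwards [hae] with ω hω
    rcases hω with h1 | h1
    · have hmem : ω ∈ {ω | ε ω = 1} := h1
      have hnmem : ω ∉ {ω | ε ω = -1} := by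
        simp only [Set.mem_setOf_eq, h1]; norm_num
      rw [Set.indicator_of_mem hmem, Set.indicator_of_notMem hnmem, h1, add_zero]
    · have hmem : ω ∈ {ω | ε ω = -1} := h1
      have hnmem : ω ∉ {ω | ε ω = 1} := by
        simp only [Set.mem_setOf_eq, h1]; norm_num
      rw [Set.indicator_of_mem hmem, Set.indicator_of_notMem hnmem, h1, zero_add]
  rw [integral_congr_ae hLHSfun]
  rw [integral_add ((integrable_const _).indicator hA1meas)
    ((integrable_const _).indicator hA2meas)]
  rw [integral_indicator_const _ hA1meas, integral_indicator_const _ hA2meas, measureReal_def, measureReal_def, hε1, hε2]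
  have htr : ((1 : ENNReal) / 2).toReal = 1 / 2 := by
    rw [ENNReal.toReal_div]; simp
  rw [htr]
  simp only [smul_eq_mul]
  linarith
end

section
/- Let S be a set, n ∈ ℕ, and for 1 ≤ i ≤ n let ψ_i : S → ℝ, φ_i : S → ℝ^K. Let (Y_{ik}) be i.i.d. symmetric integrable random variables and (ε_i) independent Rademacher variables, all mutually independent. Assume for all i and all s, s' ∈ S: ψ_i(s) - ψ_i(s') ≤ E|∑_k Y_{1k}(φ_i(s)_k - φ_i(s')_k)| (expectation over one row of Y's). Then E[sup_{s∈S} ∑_{i=1}^n ε_i ψ_i(s)] ≤ E[sup_{s∈S} ∑_{i=1}^n ∑_{k=1}^K Y_{ik} φ_i(s)_k], assuming all suprema are finite and measurable. -/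
open MeasureTheory ProbabilityTheory


open MeasureTheory ProbabilityTheory Finset
open scoped ENNReal

section Aux

variable {Ω : Type*} [MeasurableSpace Ω] {μ : Measure Ω}

lemma integrable_sup' {S : Type*} {F : Finset S} (hF : F.Nonempty) (f : S → Ω → ℝ)
    (hf : ∀ s ∈ F, Integrable (f s) μ) :
    Integrable (fun ω => F.sup' hF (fun s => f s ω)) μ := by
  induction hF using Finset.Nonempty.cons_induction with
  | singleton a =>
    simp only [Finset.sup'_singleton]
    exact hf a (by simp)
  | cons a F ha hF ih =>
    rw [show (fun ω => (Finset.cons a F ha).sup' (Finset.cons_nonempty ha) fun s => f s ω)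
        = fun ω => (f a ω) ⊔ (F.sup' hF fun s => f s ω) from funext fun ω => Finset.sup'_cons hF _]
    exact (hf a (by simp)).sup (ih fun s hs => hf s (Finset.mem_cons_of_mem hs))

lemma iIndepFun_precomp {ι ι' β : Type*} {m : MeasurableSpace β} {f : ι → Ω → β}
    (g : ι' → ι) (hg : Function.Injective g)
    (h : iIndepFun f μ) :
    iIndepFun (fun i => f (g i)) μ := by
  rw [iIndepFun_iff_measure_inter_preimage_eq_mul] at h ⊢
  intro s sets hsets
  classical
  have := h (s.image g) (sets := Function.extend g sets (fun _ => Set.univ)) ?_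
  · rw [Finset.set_biInter_finset_image, Finset.prod_image (fun a _ b _ hab => hg hab)] at this
    simp only [hg.extend_apply] at this
    exact this
  · intro j hj
    rcases Finset.mem_image.mp hj with ⟨a, ha, rfl⟩
    rw [hg.extend_apply]
    exact hsets a ha

lemma rad_integral [IsProbabilityMeasure μ] {e : Ω → ℝ} (he : Measurable e)
    (h1 : μ {ω | e ω = 1} = 1 / 2) (h2 : μ {ω | e ω = -1} = 1 / 2)
    {f : ℝ → ℝ} (hf : Measurable f) :
    ∫ ω, f (e ω) ∂μ = (f 1 + f (-1)) / 2 := by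
  classical
  set A : Set Ω := {ω | e ω = 1} with hA
  set B : Set Ω := {ω | e ω = -1} with hB
  have hAm : MeasurableSet A := he (measurableSet_singleton 1)
  have hBm : MeasurableSet B := he (measurableSet_singleton (-1))
  have hdisj : Disjoint A B := by
    rw [Set.disjoint_left]; intro ω hω1 hω2
    simp only [hA, hB, Set.mem_setOf_eq] at hω1 hω2
    norm_num [hω1] at hω2
  have hunion : μ (A ∪ B) = 1 := by
    rw [measure_union hdisj hBm, h1, h2]
    rw [ENNReal.div_add_div_same, one_add_one_eq_two]
    exact ENNReal.div_self two_ne_zero ENNReal.ofNat_ne_top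
  have hae : ∀ᵐ ω ∂μ, ω ∈ A ∪ B := by
    rw [ae_iff]
    have : {ω | ¬ ω ∈ A ∪ B} = (A ∪ B)ᶜ := rfl
    rw [this, measure_compl (hAm.union hBm) (measure_ne_top _ _), hunion, measure_univ]
    simp
  have heq : (fun ω => f (e ω)) =ᵐ[μ]
      (fun ω => A.indicator (fun _ => f 1) ω + B.indicator (fun _ => f (-1)) ω) := by
    filter_upwards [hae] with ω hω
    rcases hω with hω | hω
    · have hωB : ω ∉ B := fun hB' => hdisj.ne_of_mem hω hB' rfl
      simp only [hA, Set.mem_setOf_eq] at hω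
      rw [Set.indicator_of_mem (by exact hω) , Set.indicator_of_notMem hωB, hω, add_zero]
    · have hωA : ω ∉ A := fun hA' => hdisj.ne_of_mem hA' hω rfl
      simp only [hB, Set.mem_setOf_eq] at hω
      rw [Set.indicator_of_notMem hωA, Set.indicator_of_mem (by exact hω), hω, zero_add]
  rw [integral_congr_ae heq, integral_add
      ((integrable_const _).indicator hAm) ((integrable_const _).indicator hBm),
    integral_indicator_const _ hAm, integral_indicator_const _ hBm, measureReal_def, measureReal_def, h1, h2]
  have : ((1 : ℝ≥0∞) / 2).toReal = (1 : ℝ) / 2 := by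
    rw [ENNReal.toReal_div]; simp
  rw [this]
  simp [smul_eq_mul]
  ring

end Aux

section Aux2

variable {Ω : Type*} [MeasurableSpace Ω] {μ : Measure Ω}

lemma row_symm [IsProbabilityMeasure μ] {K : ℕ} (Z : Fin K → Ω → ℝ)
    (hmeas : ∀ k, Measurable (Z k))
    (hind : iIndepFun Z μ)
    (hsym : ∀ k, μ.map (Z k) = μ.map (fun ω => -(Z k ω))) :
    μ.map (fun ω k => Z k ω) = μ.map (fun ω k => -(Z k ω)) := by
  have hrow : Measurable (fun ω (k : Fin K) => Z k ω) :=
    measurable_pi_lambda _ (fun k => hmeas k)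
  have hnrow : Measurable (fun ω (k : Fin K) => -(Z k ω)) :=
    measurable_pi_lambda _ (fun k => (hmeas k).neg)
  have hindn : iIndepFun (fun k ω => -(Z k ω)) μ :=
    hind.comp (fun _ => Neg.neg) (fun _ => measurable_neg)
  refine ext_of_generate_finite _ generateFrom_pi.symm isPiSystem_pi ?_ ?_
  · rintro _ ⟨A, hA, rfl⟩
    have hAm : ∀ k, MeasurableSet (A k) := fun k => hA k (Set.mem_univ k)
    rw [Measure.map_apply hrow (MeasurableSet.univ_pi hAm),
      Measure.map_apply hnrow (MeasurableSet.univ_pi hAm)]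
    have h1 : (fun ω (k : Fin K) => Z k ω) ⁻¹' (Set.pi Set.univ A) = ⋂ k, Z k ⁻¹' A k := by
      ext ω; simp [Set.mem_pi]
    have h2 : (fun ω (k : Fin K) => -(Z k ω)) ⁻¹' (Set.pi Set.univ A)
        = ⋂ k, (fun ω => -(Z k ω)) ⁻¹' A k := by
      ext ω; simp [Set.mem_pi]
    rw [h1, h2, hind.meas_iInter (fun k => ⟨A k, hAm k, rfl⟩),
      hindn.meas_iInter (fun k => ⟨A k, hAm k, rfl⟩)]
    refine Finset.prod_congr rfl (fun k _ => ?_)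
    have := congrArg (fun ν => ν (A k)) (hsym k)
    simpa [Measure.map_apply (hmeas k) (hAm k),
      Measure.map_apply (show Measurable (fun ω => -(Z k ω)) from (hmeas k).neg) (hAm k)] using this
  · rw [Measure.map_apply hrow MeasurableSet.univ, Measure.map_apply hnrow MeasurableSet.univ]
    simp

/-- Core one-step contraction inequality for finite suprema. -/
lemma core_step {α : Type*} [MeasurableSpace α] (τ : Measure α) [IsProbabilityMeasure τ]
    {S : Type*} (F : Finset S) (hF : F.Nonempty) (a ψv : S → ℝ) (u : S → α → ℝ)
    (hu : ∀ s ∈ F, Integrable (u s) τ)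
    (hsym : ∫ y, F.sup' hF (fun s => a s - u s y) ∂τ
      = ∫ y, F.sup' hF (fun s => a s + u s y) ∂τ)
    (hlip : ∀ s ∈ F, ∀ s' ∈ F, ψv s - ψv s' ≤ ∫ y, |u s y - u s' y| ∂τ) :
    (F.sup' hF (fun s => a s + ψv s) + F.sup' hF (fun s => a s - ψv s)) / 2
      ≤ ∫ y, F.sup' hF (fun s => a s + u s y) ∂τ := by
  set I := ∫ y, F.sup' hF (fun s => a s + u s y) ∂τ with hI
  have hip : Integrable (fun y => F.sup' hF (fun s => a s + u s y)) τ :=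
    integrable_sup' hF _ (fun s hs => (integrable_const (a s)).add (hu s hs))
  have him : Integrable (fun y => F.sup' hF (fun s => a s - u s y)) τ :=
    integrable_sup' hF _ (fun s hs => (integrable_const (a s)).sub (hu s hs))
  have key : ∀ s ∈ F, ∀ s' ∈ F, (a s + ψv s) + (a s' - ψv s') ≤ 2 * I := by
    intro s hs s' hs'
    have h1 : (a s + ψv s) + (a s' - ψv s')
        = (a s + a s') + (ψv s - ψv s') := by ring
    have h2 : (a s + a s') + (ψv s - ψv s')
        ≤ (a s + a s') + ∫ y, |u s y - u s' y| ∂τ := by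
      linarith [hlip s hs s' hs']
    have h3 : (a s + a s') + ∫ y, |u s y - u s' y| ∂τ
        = ∫ y, ((a s + a s') + |u s y - u s' y|) ∂τ := by
      have hi : Integrable (fun y => |u s y - u s' y|) τ := by
        exact ((hu s hs).sub (hu s' hs')).abs
      rw [integral_add (integrable_const _) hi, integral_const]
      simp
    have h4 : ∫ y, ((a s + a s') + |u s y - u s' y|) ∂τ
        ≤ ∫ y, (F.sup' hF (fun t => a t + u t y) + F.sup' hF (fun t => a t - u t y)) ∂τ := by
      have hi : Integrable (fun y => |u s y - u s' y|) τ := by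
        exact ((hu s hs).sub (hu s' hs')).abs
      refine integral_mono ((integrable_const _).add hi) (hip.add him) ?_
      intro y
      dsimp only
      rcases abs_cases (u s y - u s' y) with ⟨habs, _⟩ | ⟨habs, _⟩ <;> rw [habs]
      · have e1 : a s + u s y ≤ F.sup' hF (fun t => a t + u t y) := Finset.le_sup' (fun t => a t + u t y) hs
        have e2 : a s' - u s' y ≤ F.sup' hF (fun t => a t - u t y) :=
          Finset.le_sup' (fun t => a t - u t y) hs'
        linarith
      · have e1 : a s' + u s' y ≤ F.sup' hF (fun t => a t + u t y) := Finset.le_sup' (fun t => a t + u t y) hs'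
        have e2 : a s - u s y ≤ F.sup' hF (fun t => a t - u t y) :=
          Finset.le_sup' (fun t => a t - u t y) hs
        linarith
    have h5 : ∫ y, (F.sup' hF (fun t => a t + u t y) + F.sup' hF (fun t => a t - u t y)) ∂τ
        = 2 * I := by
      rw [integral_add hip him, hsym, ← hI]
      ring
    linarith
  have hs1 : F.sup' hF (fun s => a s + ψv s) + F.sup' hF (fun s => a s - ψv s) ≤ 2 * I := by
    rw [← sub_nonneg]
    have : ∀ s ∈ F, a s + ψv s ≤ 2 * I - F.sup' hF (fun s' => a s' - ψv s') := by
      intro s hs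
      have : ∀ s' ∈ F, a s' - ψv s' ≤ 2 * I - (a s + ψv s) := by
        intro s' hs'
        linarith [key s hs s' hs']
      linarith [Finset.sup'_le hF _ this]
    linarith [Finset.sup'_le hF _ this]
  linarith

end Aux2
open MeasureTheory ProbabilityTheory Finset
open scoped ENNReal

section AuxM
variable {Ω : Type*} [MeasurableSpace Ω] {μ : Measure Ω}

lemma measurable_sup'' {S : Type*} {F : Finset S} (hF : F.Nonempty) (f : S → Ω → ℝ)
    (hf : ∀ s ∈ F, Measurable (f s)) :
    Measurable (fun ω => F.sup' hF (fun s => f s ω)) := by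
  induction hF using Finset.Nonempty.cons_induction with
  | singleton a =>
    simp only [Finset.sup'_singleton]
    exact hf a (by simp)
  | cons a F ha hF ih =>
    rw [show (fun ω => (Finset.cons a F ha).sup' (Finset.cons_nonempty ha) fun s => f s ω)
        = fun ω => (f a ω) ⊔ (F.sup' hF fun s => f s ω) from funext fun ω => Finset.sup'_cons hF _]
    exact (hf a (by simp)).sup (ih fun s hs => hf s (Finset.mem_cons_of_mem hs))

end AuxM

section Step

variable {Ω : Type*} [MeasurableSpace Ω]

set_option maxHeartbeats 1000000 in
lemma step_lemma (μ : Measure Ω) [IsProbabilityMeasure μ]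
    {S : Type*} (n K : ℕ)
    (ψ : Fin n → S → ℝ) (φ : Fin n → S → Fin K → ℝ)
    (Y : Fin n → Fin K → Ω → ℝ) (ε : Fin n → Ω → ℝ)
    (hYmeas : ∀ i k, Measurable (Y i k)) (hεmeas : ∀ i, Measurable (ε i))
    (hsymm : ∀ i k, IdentDistrib (Y i k) (fun ω => -(Y i k ω)) μ μ)
    (hYint : ∀ i k, Integrable (Y i k) μ)
    (hεint : ∀ i, Integrable (ε i) μ)
    (hε1 : ∀ i, μ {ω | ε i ω = 1} = 1 / 2) (hε2 : ∀ i, μ {ω | ε i ω = -1} = 1 / 2)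
    (hindep : iIndepFun
      (fun j : Fin n ⊕ Fin n × Fin K => Sum.elim ε (fun q => Y q.1 q.2) j) μ)
    (hlip : ∀ i, ∀ s s' : S,
      ψ i s - ψ i s' ≤ ∫ ω, |∑ k, Y i k ω * (φ i s k - φ i s' k)| ∂μ)
    (F : Finset S) (hF : F.Nonempty) (m : ℕ) (hm : m < n) :
    ∫ ω, F.sup' hF (fun s => ∑ i : Fin n,
        if (i : ℕ) < m then ∑ k, Y i k ω * φ i s k else ε i ω * ψ i s) ∂μ
      ≤ ∫ ω, F.sup' hF (fun s => ∑ i : Fin n,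
        if (i : ℕ) < m + 1 then ∑ k, Y i k ω * φ i s k else ε i ω * ψ i s) ∂μ := by
  classical
  set X : (Fin n ⊕ Fin n × Fin K) → Ω → ℝ := Sum.elim ε (fun q => Y q.1 q.2) with hX
  have hXmeas : ∀ j, Measurable (X j) := by
    rintro (i | q)
    · exact hεmeas i
    · exact hYmeas q.1 q.2
  set m' : Fin n := ⟨m, hm⟩ with hm'
  -- the row (Y m' k)_k and its law
  set row : Ω → (Fin K → ℝ) := fun ω k => Y m' k ω with hrow
  have hrowmeas : Measurable row := measurable_pi_lambda _ (fun k => hYmeas m' k)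
  set τ : Measure (Fin K → ℝ) := μ.map row with hτ
  set ρ : Measure ℝ := μ.map (ε m') with hρ
  have : IsProbabilityMeasure τ := Measure.isProbabilityMeasure_map hrowmeas.aemeasurable
  have : IsProbabilityMeasure ρ := Measure.isProbabilityMeasure_map (hεmeas m').aemeasurable
  have hrowindep : iIndepFun (fun k => Y m' k) μ := by
    have := iIndepFun_precomp (f := X)
      (g := fun k : Fin K => (Sum.inr (m', k) : Fin n ⊕ Fin n × Fin K))
      (fun k k' h => by simpa using h) hindep
    exact this
  have hτsym : μ.map row = μ.map (fun ω k => -(Y m' k ω)) :=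
    row_symm (fun k => Y m' k) (fun k => hYmeas m' k) hrowindep
      (fun k => (hsymm m' k).map_eq)
  -- the index block of the step variables
  set Jm : Finset (Fin n ⊕ Fin n × Fin K) :=
    insert (Sum.inl m') (Finset.univ.image fun k => (Sum.inr (m', k))) with hJm
  have hmem1 : (Sum.inl m') ∈ Jm := Finset.mem_insert_self _ _
  have hmem2 : ∀ k, (Sum.inr (m', k)) ∈ Jm := fun k =>
    Finset.mem_insert_of_mem (Finset.mem_image_of_mem _ (Finset.mem_univ k))
  have hmemc1 : ∀ i : Fin n, i ≠ m' → (Sum.inl i) ∈ Jmᶜ := by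
    intro i hi
    rw [Finset.mem_compl]
    intro hmem
    simp only [hJm, Finset.mem_insert, Finset.mem_image, Finset.mem_univ, true_and] at hmem
    rcases hmem with h | ⟨k', h⟩
    · exact hi (by injection h)
    · cases h
  have hmemc2 : ∀ (i : Fin n) (k : Fin K), i ≠ m' → (Sum.inr (i, k)) ∈ Jmᶜ := by
    intro i k hi
    rw [Finset.mem_compl]
    intro hmem
    simp only [hJm, Finset.mem_insert, Finset.mem_image, Finset.mem_univ, true_and] at hmem
    rcases hmem with h | ⟨k', h⟩
    · cases h
    · injection h with h'
      exact hi (congrArg Prod.fst h').symm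
  set φV : ({j : Fin n ⊕ Fin n × Fin K // j ∈ Jmᶜ} → ℝ) → ((Fin n ⊕ Fin n × Fin K) → ℝ) :=
    fun w j => if h : j ∈ Jmᶜ then w ⟨j, h⟩ else 0 with hφV
  have hφVmeas : Measurable φV := by
    refine measurable_pi_lambda _ (fun j => ?_)
    by_cases h : j ∈ Jmᶜ
    · simpa only [hφV, dif_pos h] using measurable_pi_apply _
    · simpa only [hφV, dif_neg h] using measurable_const
  set φU : ({j : Fin n ⊕ Fin n × Fin K // j ∈ Jm} → ℝ) → ℝ × (Fin K → ℝ) :=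
    fun w => (w ⟨Sum.inl m', hmem1⟩, fun k => w ⟨Sum.inr (m', k), hmem2 k⟩) with hφU
  have hφUmeas : Measurable φU :=
    (measurable_pi_apply _).prodMk (measurable_pi_lambda _ fun k => measurable_pi_apply _)
  set Vvec : Ω → ((Fin n ⊕ Fin n × Fin K) → ℝ) :=
    fun ω => φV (fun j => X j.1 ω) with hVvec
  set U : Ω → ℝ × (Fin K → ℝ) := fun ω => φU (fun j => X j.1 ω) with hU
  have hVmeas : Measurable Vvec :=
    hφVmeas.comp (measurable_pi_lambda _ fun j => hXmeas j.1)
  have hUmeas : Measurable U :=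
    hφUmeas.comp (measurable_pi_lambda _ fun j => hXmeas j.1)
  have hU1 : ∀ ω, (U ω).1 = ε m' ω := fun ω => rfl
  have hU2 : ∀ ω k, (U ω).2 k = Y m' k ω := fun ω k => rfl
  have hVval1 : ∀ ω (i : Fin n), i ≠ m' → Vvec ω (Sum.inl i) = ε i ω := by
    intro ω i hi
    simp only [hVvec, hφV, dif_pos (hmemc1 i hi)]
    rfl
  have hVval2 : ∀ ω (i : Fin n) (k : Fin K), i ≠ m' → Vvec ω (Sum.inr (i, k)) = Y i k ω := by
    intro ω i k hi
    simp only [hVvec, hφV, dif_pos (hmemc2 i k hi)]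
    rfl
  have hVU : IndepFun Vvec U μ := by
    have hbase := hindep.indepFun_finset Jmᶜ Jm disjoint_compl_left hXmeas
    exact hbase.comp hφVmeas hφUmeas
  have hprod : μ.map (fun ω => (Vvec ω, U ω)) = (μ.map Vvec).prod (μ.map U) :=
    (indepFun_iff_map_prod_eq_prod_map_map hVmeas.aemeasurable hUmeas.aemeasurable).mp hVU
  have hεrow : IndepFun (ε m') row μ := by
    have hdisj : Disjoint ({Sum.inl m'} : Finset (Fin n ⊕ Fin n × Fin K))
        (Finset.univ.image fun k => (Sum.inr (m', k) : Fin n ⊕ Fin n × Fin K)) := by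
      simp [Finset.disjoint_left]
    have hbase := hindep.indepFun_finset {Sum.inl m'}
      (Finset.univ.image fun k => (Sum.inr (m', k) : Fin n ⊕ Fin n × Fin K)) hdisj hXmeas
    have hinr : ∀ k : Fin K, (Sum.inr (m', k) : Fin n ⊕ Fin n × Fin K) ∈
        (Finset.univ.image fun k => (Sum.inr (m', k) : Fin n ⊕ Fin n × Fin K)) :=
      fun k => Finset.mem_image_of_mem _ (Finset.mem_univ k)
    have := hbase.comp
      (φ := fun w : {j : Fin n ⊕ Fin n × Fin K // j ∈ ({Sum.inl m'} : Finset _)} → ℝ =>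
        w ⟨Sum.inl m', Finset.mem_singleton_self _⟩)
      (ψ := fun w : {j : Fin n ⊕ Fin n × Fin K //
          j ∈ Finset.univ.image fun k => (Sum.inr (m', k) : Fin n ⊕ Fin n × Fin K)} → ℝ =>
        (fun k => w ⟨Sum.inr (m', k), hinr k⟩))
      (_mγ := inferInstance) (_mγ' := inferInstance)
      (measurable_pi_apply _) (measurable_pi_lambda _ fun k => measurable_pi_apply _)
    exact this
  have hUprod : μ.map U = ρ.prod τ := by
    rw [hρ, hτ]
    exact (indepFun_iff_map_prod_eq_prod_map_map (hεmeas m').aemeasurable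
      hrowmeas.aemeasurable).mp hεrow
  -- the contribution of the coordinates other than `m'`
  set A : ((Fin n ⊕ Fin n × Fin K) → ℝ) → S → ℝ := fun v s =>
    ∑ i ∈ Finset.univ.erase m',
      (if (i : ℕ) < m then ∑ k, v (Sum.inr (i, k)) * φ i s k else v (Sum.inl i) * ψ i s)
    with hA
  have hAmeas : ∀ s, Measurable (fun v => A v s) := by
    intro s
    refine Finset.measurable_sum _ (fun i _ => ?_)
    split_ifs
    · exact Finset.measurable_sum _ (fun k _ => (measurable_pi_apply _).mul_const _)
    · exact (measurable_pi_apply _).mul_const _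
  have hArest : ∀ ω s, A (Vvec ω) s = ∑ i ∈ Finset.univ.erase m',
      (if (i : ℕ) < m then ∑ k, Y i k ω * φ i s k else ε i ω * ψ i s) := by
    intro ω s
    refine Finset.sum_congr rfl (fun i hi => ?_)
    have hi' : i ≠ m' := Finset.ne_of_mem_erase hi
    split_ifs with h
    · exact Finset.sum_congr rfl (fun k _ => by rw [hVval2 ω i k hi'])
    · rw [hVval1 ω i hi']
  have hiff : ∀ i : Fin n, i ≠ m' → (((i : ℕ) < m) ↔ ((i : ℕ) < m + 1)) := by
    intro i hi
    constructor
    · exact fun h => Nat.lt_succ_of_lt h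
    · intro h
      rcases Nat.lt_succ_iff_lt_or_eq.mp h with h' | h'
      · exact h'
      · exact absurd (Fin.ext h' : i = m') hi
  -- the two functions on the product space
  set f : ((Fin n ⊕ Fin n × Fin K) → ℝ) × (ℝ × (Fin K → ℝ)) → ℝ :=
    fun p => F.sup' hF (fun s => A p.1 s + p.2.1 * ψ m' s) with hf
  set g : ((Fin n ⊕ Fin n × Fin K) → ℝ) × (ℝ × (Fin K → ℝ)) → ℝ :=
    fun p => F.sup' hF (fun s => A p.1 s + ∑ k, p.2.2 k * φ m' s k) with hg
  have hfmeas : Measurable f :=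
    measurable_sup'' hF _ (fun s _ => ((hAmeas s).comp measurable_fst).add
      (((measurable_fst.comp measurable_snd)).mul_const _))
  have hgmeas : Measurable g :=
    measurable_sup'' hF _ (fun s _ => ((hAmeas s).comp measurable_fst).add
      (Finset.measurable_sum _ (fun k _ =>
        ((measurable_pi_apply k).comp (measurable_snd.comp measurable_snd)).mul_const _)))
  -- identification of the two sides with f, g composed with (Vvec, U)
  have hHmf : ∀ ω, F.sup' hF (fun s => ∑ i : Fin n,
      if (i : ℕ) < m then ∑ k, Y i k ω * φ i s k else ε i ω * ψ i s) = f (Vvec ω, U ω) := by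
    intro ω
    refine Finset.sup'_congr hF rfl (fun s _ => ?_)
    rw [← Finset.add_sum_erase _ _ (Finset.mem_univ m'), ← hArest ω s]
    have : ¬ ((m' : ℕ) < m) := by simp [hm']
    rw [if_neg this, hU1 ω, add_comm]
  have hHmg : ∀ ω, F.sup' hF (fun s => ∑ i : Fin n,
      if (i : ℕ) < m + 1 then ∑ k, Y i k ω * φ i s k else ε i ω * ψ i s) = g (Vvec ω, U ω) := by
    intro ω
    refine Finset.sup'_congr hF rfl (fun s _ => ?_)
    rw [← Finset.add_sum_erase _ _ (Finset.mem_univ m')]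
    have h1 : ((m' : ℕ) < m + 1) := by simp [hm']
    rw [if_pos h1, add_comm]
    congr 1
    · rw [hArest ω s]
      refine Finset.sum_congr rfl (fun i hi => ?_)
      have hi' : i ≠ m' := Finset.ne_of_mem_erase hi
      by_cases h : (i : ℕ) < m
      · rw [if_pos h, if_pos ((hiff i hi').mp h)]
      · rw [if_neg h, if_neg (fun hc => h ((hiff i hi').mpr hc))]
  -- integrability over μ
  have hterm_int : ∀ (M : ℕ) (s : S), Integrable (fun ω => ∑ i : Fin n,
      if (i : ℕ) < M then ∑ k, Y i k ω * φ i s k else ε i ω * ψ i s) μ := by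
    intro M s
    refine integrable_finset_sum _ (fun i _ => ?_)
    split_ifs
    · exact integrable_finset_sum _ (fun k _ => (hYint i k).mul_const _)
    · exact (hεint i).mul_const _
  have hHint : ∀ M : ℕ, Integrable (fun ω => F.sup' hF (fun s => ∑ i : Fin n,
      if (i : ℕ) < M then ∑ k, Y i k ω * φ i s k else ε i ω * ψ i s)) μ :=
    fun M => integrable_sup' hF _ (fun s _ => hterm_int M s)
  have hPmeas : Measurable (fun ω => (Vvec ω, U ω)) := hVmeas.prodMk hUmeas
  have hfPint : Integrable (fun ω => f (Vvec ω, U ω)) μ := by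
    have := hHint m
    rwa [show (fun ω => F.sup' hF (fun s => ∑ i : Fin n,
      if (i : ℕ) < m then ∑ k, Y i k ω * φ i s k else ε i ω * ψ i s))
      = (fun ω => f (Vvec ω, U ω)) from funext hHmf] at this
  have hgPint : Integrable (fun ω => g (Vvec ω, U ω)) μ := by
    have := hHint (m + 1)
    rwa [show (fun ω => F.sup' hF (fun s => ∑ i : Fin n,
      if (i : ℕ) < m + 1 then ∑ k, Y i k ω * φ i s k else ε i ω * ψ i s))
      = (fun ω => g (Vvec ω, U ω)) from funext hHmg] at this
  have hfint : Integrable f ((μ.map Vvec).prod (μ.map U)) := by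
    rw [← hprod]
    exact (integrable_map_measure hfmeas.aestronglyMeasurable hPmeas.aemeasurable).mpr hfPint
  have hgint : Integrable g ((μ.map Vvec).prod (μ.map U)) := by
    rw [← hprod]
    exact (integrable_map_measure hgmeas.aestronglyMeasurable hPmeas.aemeasurable).mpr hgPint
  have hLHS : ∫ ω, F.sup' hF (fun s => ∑ i : Fin n,
      if (i : ℕ) < m then ∑ k, Y i k ω * φ i s k else ε i ω * ψ i s) ∂μ
      = ∫ v, ∫ u, f (v, u) ∂(μ.map U) ∂(μ.map Vvec) := by
    rw [show (fun ω => F.sup' hF (fun s => ∑ i : Fin n,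
      if (i : ℕ) < m then ∑ k, Y i k ω * φ i s k else ε i ω * ψ i s))
      = (fun ω => f (Vvec ω, U ω)) from funext hHmf,
      ← integral_map hPmeas.aemeasurable hfmeas.aestronglyMeasurable, hprod,
      integral_prod f hfint]
  have hRHS : ∫ ω, F.sup' hF (fun s => ∑ i : Fin n,
      if (i : ℕ) < m + 1 then ∑ k, Y i k ω * φ i s k else ε i ω * ψ i s) ∂μ
      = ∫ v, ∫ u, g (v, u) ∂(μ.map U) ∂(μ.map Vvec) := by
    rw [show (fun ω => F.sup' hF (fun s => ∑ i : Fin n,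
      if (i : ℕ) < m + 1 then ∑ k, Y i k ω * φ i s k else ε i ω * ψ i s))
      = (fun ω => g (Vvec ω, U ω)) from funext hHmg,
      ← integral_map hPmeas.aemeasurable hgmeas.aestronglyMeasurable, hprod,
      integral_prod g hgint]
  rw [hLHS, hRHS]
  refine integral_mono hfint.integral_prod_left hgint.integral_prod_left (fun v => ?_)
  -- inner inequality for a fixed value of the other variables
  set a : S → ℝ := A v with ha
  set u : S → (Fin K → ℝ) → ℝ := fun s y => ∑ k, y k * φ m' s k with hu
  have humeas : ∀ s, Measurable (u s) :=
    fun s => Finset.measurable_sum _ (fun k _ => (measurable_pi_apply k).mul_const _)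
  have huint : ∀ s, Integrable (u s) τ := by
    intro s
    rw [hτ]
    refine (integrable_map_measure (humeas s).aestronglyMeasurable
      hrowmeas.aemeasurable).mpr ?_
    exact integrable_finset_sum _ (fun k _ => (hYint m' k).mul_const _)
  -- symmetry of the row law
  have hsymInt : ∫ y, F.sup' hF (fun s => a s - u s y) ∂τ
      = ∫ y, F.sup' hF (fun s => a s + u s y) ∂τ := by
    have hGp : Measurable (fun y => F.sup' hF (fun s => a s + u s y)) :=
      measurable_sup'' hF _ (fun s _ => (measurable_const.add (humeas s)))
    have hGm : Measurable (fun y => F.sup' hF (fun s => a s - u s y)) :=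
      measurable_sup'' hF _ (fun s _ => (measurable_const.sub (humeas s)))
    have hnegrow : Measurable (fun ω (k : Fin K) => -(Y m' k ω)) :=
      measurable_pi_lambda _ (fun k => (hYmeas m' k).neg)
    have h1 : ∫ y, F.sup' hF (fun s => a s + u s y) ∂τ
        = ∫ ω, F.sup' hF (fun s => a s + u s (fun k => -(Y m' k ω))) ∂μ := by
      rw [hτ, hτsym]
      exact integral_map hnegrow.aemeasurable hGp.aestronglyMeasurable
    have h2 : ∀ ω, F.sup' hF (fun s => a s + u s (fun k => -(Y m' k ω)))
        = F.sup' hF (fun s => a s - u s (row ω)) := by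
      intro ω
      refine Finset.sup'_congr hF rfl (fun s _ => ?_)
      have : u s (fun k => -(Y m' k ω)) = - u s (row ω) := by
        simp only [hu, hrow]
        rw [← Finset.sum_neg_distrib]
        exact Finset.sum_congr rfl (fun k _ => by ring)
      rw [this, sub_eq_add_neg]
    have h3 : ∫ y, F.sup' hF (fun s => a s - u s y) ∂τ
        = ∫ ω, F.sup' hF (fun s => a s - u s (row ω)) ∂μ := by
      rw [hτ]
      exact integral_map hrowmeas.aemeasurable hGm.aestronglyMeasurable
    rw [h1, h3]
    exact (integral_congr_ae (Filter.Eventually.of_forall (fun ω => (h2 ω)))).symm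
  -- the Lipschitz hypothesis transported to the row law
  have hlipF : ∀ s ∈ F, ∀ s' ∈ F, ψ m' s - ψ m' s' ≤ ∫ y, |u s y - u s' y| ∂τ := by
    intro s _ s' _
    refine le_trans (hlip m' s s') (le_of_eq ?_)
    have habs : Measurable (fun y => |u s y - u s' y|) := ((humeas s).sub (humeas s')).abs
    rw [hτ, integral_map hrowmeas.aemeasurable habs.aestronglyMeasurable]
    refine integral_congr_ae (Filter.Eventually.of_forall (fun ω => ?_))
    have heq : ∑ k, Y m' k ω * (φ m' s k - φ m' s' k) = u s (row ω) - u s' (row ω) := by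
      simp only [hu, hrow, ← Finset.sum_sub_distrib]
      exact Finset.sum_congr rfl (fun k _ => by ring)
    dsimp only
    rw [heq]
  have hcore := core_step τ F hF a (ψ m') u (fun s _ => huint s) hsymInt hlipF
  -- compute the inner integrals over the law of `U`
  have hfs : Measurable (fun x : ℝ => F.sup' hF (fun s => a s + x * ψ m' s)) :=
    measurable_sup'' hF _ (fun s _ => measurable_const.add (measurable_id'.mul_const _))
  have hfst_map : (ρ.prod τ).map Prod.fst = ρ := Measure.fst_prod
  have hsnd_map : (ρ.prod τ).map Prod.snd = τ := Measure.snd_prod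
  have hρint : ∀ s, Integrable (fun x : ℝ => a s + x * ψ m' s) ρ := by
    intro s
    rw [hρ]
    refine (integrable_map_measure (measurable_const.add
      (measurable_id'.mul_const _)).aestronglyMeasurable (hεmeas m').aemeasurable).mpr ?_
    exact (integrable_const _).add ((hεint m').mul_const _)
  have hfint2 : Integrable (fun p : ℝ × (Fin K → ℝ) =>
      F.sup' hF (fun s => a s + p.1 * ψ m' s)) (ρ.prod τ) := by
    refine integrable_sup' hF _ (fun s hs => ?_)
    exact (integrable_map_measure (measurable_const.add
      (measurable_id'.mul_const _)).aestronglyMeasurable measurable_fst.aemeasurable).mp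
      (by rw [hfst_map]; exact hρint s)
  have hgint2 : Integrable (fun p : ℝ × (Fin K → ℝ) =>
      F.sup' hF (fun s => a s + u s p.2)) (ρ.prod τ) := by
    refine integrable_sup' hF _ (fun s hs => ?_)
    exact (integrable_map_measure (measurable_const.add
      (humeas s)).aestronglyMeasurable measurable_snd.aemeasurable).mp
      (by rw [hsnd_map]; exact (integrable_const _).add (huint s))
  have hIL : ∫ w, f (v, w) ∂(μ.map U)
      = (F.sup' hF (fun s => a s + ψ m' s) + F.sup' hF (fun s => a s - ψ m' s)) / 2 := by
    rw [hUprod]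
    have hfv : (fun w : ℝ × (Fin K → ℝ) => f (v, w))
        = fun w => F.sup' hF (fun s => a s + w.1 * ψ m' s) := rfl
    rw [hfv, integral_prod _ hfint2]
    have hin : ∀ x : ℝ, (∫ y, (F.sup' hF fun s => a s + x * ψ m' s) ∂τ)
        = F.sup' hF (fun s => a s + x * ψ m' s) := by
      intro x
      rw [integral_const]
      simp [measure_univ]
    rw [integral_congr_ae (Filter.Eventually.of_forall hin)]
    have hρ1 : ρ {x : ℝ | x = 1} = 1 / 2 := by
      rw [hρ, Measure.map_apply (hεmeas m') (by simp [Set.setOf_eq_eq_singleton])]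
      exact hε1 m'
    have hρ2 : ρ {x : ℝ | x = -1} = 1 / 2 := by
      rw [hρ, Measure.map_apply (hεmeas m') (by simp [Set.setOf_eq_eq_singleton])]
      exact hε2 m'
    rw [rad_integral measurable_id' hρ1 hρ2 hfs]
    congr 1
    · congr 1
      · exact Finset.sup'_congr hF rfl (fun s _ => by rw [one_mul])
      · exact Finset.sup'_congr hF rfl (fun s _ => by rw [neg_one_mul, ← sub_eq_add_neg])
  have hIR : ∫ w, g (v, w) ∂(μ.map U) = ∫ y, F.sup' hF (fun s => a s + u s y) ∂τ := by
    rw [hUprod]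
    have hgv : (fun w : ℝ × (Fin K → ℝ) => g (v, w))
        = fun w => F.sup' hF (fun s => a s + u s w.2) := rfl
    rw [hgv, integral_prod _ hgint2]
    dsimp only
    rw [integral_const]
    simp [measure_univ]
  dsimp only
  rw [hIL, hIR]
  exact hcore

end Step

/-- Finite-dimensional core of the vector-contraction inequality: if `(Y i k)` are i.i.d.
symmetric integrable variables, `(ε i)` independent Rademacher variables, all mutually
independent, and `ψ i s - ψ i s' ≤ E|∑ k, Y i k (φ i s k - φ i s' k)|`, then
`E sup_s ∑ i, ε i ψ i s ≤ E sup_s ∑ i k, Y i k φ i s k`. -/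
theorem stmt8
    {Ω : Type*} [MeasurableSpace Ω] (μ : Measure Ω) [IsProbabilityMeasure μ]
    {S : Type*} [Nonempty S] (n K : ℕ)
    (ψ : Fin n → S → ℝ) (φ : Fin n → S → Fin K → ℝ)
    (Y : Fin n → Fin K → Ω → ℝ) (ε : Fin n → Ω → ℝ)
    (hYmeas : ∀ i k, Measurable (Y i k)) (hεmeas : ∀ i, Measurable (ε i))
    -- the `Y i k` are identically distributed and symmetric
    (hident : ∀ i k i' k', IdentDistrib (Y i k) (Y i' k') μ μ)
    (hsymm : ∀ i k, IdentDistrib (Y i k) (fun ω => -(Y i k ω)) μ μ)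
    (hYint : ∀ i k, Integrable (Y i k) μ)
    -- the `ε i` are Rademacher variables
    (hε1 : ∀ i, μ {ω | ε i ω = 1} = 1 / 2) (hε2 : ∀ i, μ {ω | ε i ω = -1} = 1 / 2)
    -- all the variables `Y i k` and `ε i` are mutually independent
    (hindep : iIndepFun
      (fun j : Fin n ⊕ Fin n × Fin K => Sum.elim ε (fun q => Y q.1 q.2) j) μ)
    -- the Lipschitz-type domination hypothesis (the expectation over one row of `Y`'s)
    (hlip : ∀ i, ∀ s s' : S,
      ψ i s - ψ i s' ≤ ∫ ω, |∑ k, Y i k ω * (φ i s k - φ i s' k)| ∂μ)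
    -- the suprema are finite and measurable (integrable)
    (hbdd1 : ∀ ω, BddAbove (Set.range fun s => ∑ i, ε i ω * ψ i s))
    (hbdd2 : ∀ ω, BddAbove (Set.range fun s => ∑ i, ∑ k, Y i k ω * φ i s k))
    (hint1 : Integrable (fun ω => ⨆ s, ∑ i, ε i ω * ψ i s) μ)
    (hint2 : Integrable (fun ω => ⨆ s, ∑ i, ∑ k, Y i k ω * φ i s k) μ) :
    ∫ ω, (⨆ s, ∑ i, ε i ω * ψ i s) ∂μ
      ≤ ∫ ω, (⨆ s, ∑ i, ∑ k, Y i k ω * φ i s k) ∂μ := by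
  classical
  have hεae : ∀ i, ∀ᵐ ω ∂μ, ε i ω = 1 ∨ ε i ω = -1 := by
    intro i
    have hAm : MeasurableSet {ω | ε i ω = 1} := hεmeas i (measurableSet_singleton 1)
    have hBm : MeasurableSet {ω | ε i ω = -1} := hεmeas i (measurableSet_singleton (-1))
    have hdisj : Disjoint {ω | ε i ω = 1} {ω | ε i ω = -1} := by
      rw [Set.disjoint_left]
      intro ω h1 h2
      simp only [Set.mem_setOf_eq] at h1 h2
      norm_num [h1] at h2
    have hun : μ ({ω | ε i ω = 1} ∪ {ω | ε i ω = -1}) = 1 := by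
      rw [measure_union hdisj hBm, hε1 i, hε2 i, ENNReal.div_add_div_same, one_add_one_eq_two]
      exact ENNReal.div_self two_ne_zero ENNReal.ofNat_ne_top
    have hae0 : ∀ᵐ ω ∂μ, ω ∈ {ω | ε i ω = 1} ∪ {ω | ε i ω = -1} := by
      rw [ae_iff]
      have heq0 : {ω | ¬ ω ∈ ({ω | ε i ω = 1} ∪ {ω | ε i ω = -1})}
          = ({ω | ε i ω = 1} ∪ {ω | ε i ω = -1})ᶜ := rfl
      rw [heq0, measure_compl (hAm.union hBm) (measure_ne_top _ _), hun, measure_univ]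
      simp
    filter_upwards [hae0] with ω hω using hω
  have hεint : ∀ i, Integrable (ε i) μ := by
    intro i
    refine Integrable.mono' (integrable_const 1) (hεmeas i).aestronglyMeasurable ?_
    filter_upwards [hεae i] with ω hω
    rcases hω with h | h <;> simp [h]
  refine le_of_forall_pos_le_add (fun δ hδ => ?_)
  set c : (Fin n → Bool) → Fin n → ℝ := fun σ i => if σ i then 1 else -1 with hc
  set sel : (Fin n → Bool) → S := fun σ =>
    if h : ∃ s, (⨆ s', ∑ i, c σ i * ψ i s') - δ < ∑ i, c σ i * ψ i s then h.choose
    else Classical.arbitrary S with hsel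
  set F : Finset S := Finset.image sel Finset.univ with hFdef
  have hF : F.Nonempty := ⟨sel (fun _ => true), Finset.mem_image_of_mem _ (Finset.mem_univ _)⟩
  have hterm_int : ∀ (M : ℕ) (s : S), Integrable (fun ω => ∑ i : Fin n,
      if (i : ℕ) < M then ∑ k, Y i k ω * φ i s k else ε i ω * ψ i s) μ := by
    intro M s
    refine integrable_finset_sum _ (fun i _ => ?_)
    split_ifs
    · exact integrable_finset_sum _ (fun k _ => (hYint i k).mul_const _)
    · exact (hεint i).mul_const _
  have hHint : ∀ M : ℕ, Integrable (fun ω => F.sup' hF (fun s => ∑ i : Fin n,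
      if (i : ℕ) < M then ∑ k, Y i k ω * φ i s k else ε i ω * ψ i s)) μ :=
    fun M => integrable_sup' hF _ (fun s _ => hterm_int M s)
  have hchain : ∀ M : ℕ, M ≤ n →
      ∫ ω, F.sup' hF (fun s => ∑ i : Fin n,
        if (i : ℕ) < 0 then ∑ k, Y i k ω * φ i s k else ε i ω * ψ i s) ∂μ
      ≤ ∫ ω, F.sup' hF (fun s => ∑ i : Fin n,
        if (i : ℕ) < M then ∑ k, Y i k ω * φ i s k else ε i ω * ψ i s) ∂μ := by
    intro M
    induction M with
    | zero => intro _; exact le_refl _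
    | succ M ih =>
      intro hM
      exact le_trans (ih (Nat.le_of_succ_le hM))
        (step_lemma μ n K ψ φ Y ε hYmeas hεmeas hsymm hYint hεint hε1 hε2 hindep hlip
          F hF M (Nat.lt_of_succ_le hM))
  have hend : ∫ ω, F.sup' hF (fun s => ∑ i : Fin n,
        if (i : ℕ) < n then ∑ k, Y i k ω * φ i s k else ε i ω * ψ i s) ∂μ
      ≤ ∫ ω, (⨆ s, ∑ i, ∑ k, Y i k ω * φ i s k) ∂μ := by
    refine integral_mono (hHint n) hint2 (fun ω => ?_)
    refine Finset.sup'_le hF _ (fun s hs => ?_)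
    have heq : ∑ i : Fin n, (if (i : ℕ) < n then ∑ k, Y i k ω * φ i s k else ε i ω * ψ i s)
        = ∑ i : Fin n, ∑ k, Y i k ω * φ i s k :=
      Finset.sum_congr rfl (fun i _ => if_pos i.isLt)
    rw [heq]
    exact le_ciSup (hbdd2 ω) s
  have hstart : ∫ ω, (⨆ s, ∑ i, ε i ω * ψ i s) ∂μ
      ≤ (∫ ω, F.sup' hF (fun s => ∑ i : Fin n,
        if (i : ℕ) < 0 then ∑ k, Y i k ω * φ i s k else ε i ω * ψ i s) ∂μ) + δ := by
    have key : ∀ᵐ ω ∂μ, (⨆ s, ∑ i, ε i ω * ψ i s)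
        ≤ F.sup' hF (fun s => ∑ i : Fin n,
          if (i : ℕ) < 0 then ∑ k, Y i k ω * φ i s k else ε i ω * ψ i s) + δ := by
      have hall : ∀ᵐ ω ∂μ, ∀ i, ε i ω = 1 ∨ ε i ω = -1 := (ae_all_iff).mpr hεae
      filter_upwards [hall] with ω hω
      set σ : Fin n → Bool := fun i => if ε i ω = 1 then true else false with hσ
      have hcc : ∀ i, c σ i = ε i ω := by
        intro i
        rcases hω i with h | h
        · simp [hσ, hc, h]
        · have hne : ¬ (ε i ω = 1) := by rw [h]; norm_num
          simp only [hσ, hc, hne, if_false, h]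
          norm_num
      have hsum : ∀ s, ∑ i, ε i ω * ψ i s = ∑ i, c σ i * ψ i s :=
        fun s => Finset.sum_congr rfl (fun i _ => by rw [hcc i])
      have hbdd : BddAbove (Set.range fun s => ∑ i, c σ i * ψ i s) := by
        have hb := hbdd1 ω
        rwa [show (fun s => ∑ i, ε i ω * ψ i s) = (fun s => ∑ i, c σ i * ψ i s)
          from funext hsum] at hb
      have hlt : (⨆ s', ∑ i, c σ i * ψ i s') - δ < ⨆ s', ∑ i, c σ i * ψ i s' :=
        sub_lt_self _ hδ
      have hex : ∃ s, (⨆ s', ∑ i, c σ i * ψ i s') - δ < ∑ i, c σ i * ψ i s :=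
        exists_lt_of_lt_ciSup hlt
      have hselspec : (⨆ s', ∑ i, c σ i * ψ i s') - δ < ∑ i, c σ i * ψ i (sel σ) := by
        rw [hsel]
        dsimp only
        rw [dif_pos hex]
        exact hex.choose_spec
      have hmemF : sel σ ∈ F := Finset.mem_image_of_mem _ (Finset.mem_univ σ)
      have hle : ∑ i, ε i ω * ψ i (sel σ) ≤ F.sup' hF (fun s => ∑ i : Fin n,
          if (i : ℕ) < 0 then ∑ k, Y i k ω * φ i s k else ε i ω * ψ i s) := by
        have hls := Finset.le_sup' (f := fun s => ∑ i : Fin n,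
          if (i : ℕ) < 0 then ∑ k, Y i k ω * φ i s k else ε i ω * ψ i s) hmemF
        simp only [Nat.not_lt_zero, ↓reduceIte] at hls
        exact hls
      calc (⨆ s, ∑ i, ε i ω * ψ i s) = ⨆ s, ∑ i, c σ i * ψ i s := iSup_congr hsum
        _ ≤ (∑ i, c σ i * ψ i (sel σ)) + δ := by linarith [hselspec]
        _ = (∑ i, ε i ω * ψ i (sel σ)) + δ := by rw [← hsum (sel σ)]
        _ ≤ _ + δ := by linarith
    have hH0 := hHint 0
    calc ∫ ω, (⨆ s, ∑ i, ε i ω * ψ i s) ∂μ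
        ≤ ∫ ω, (F.sup' hF (fun s => ∑ i : Fin n,
          if (i : ℕ) < 0 then ∑ k, Y i k ω * φ i s k else ε i ω * ψ i s) + δ) ∂μ :=
          integral_mono_ae hint1 (hH0.add (integrable_const δ)) key
      _ = (∫ ω, F.sup' hF (fun s => ∑ i : Fin n,
          if (i : ℕ) < 0 then ∑ k, Y i k ω * φ i s k else ε i ω * ψ i s) ∂μ) + δ := by
          rw [integral_add hH0 (integrable_const _), integral_const]
          simp [measure_univ]
  calc ∫ ω, (⨆ s, ∑ i, ε i ω * ψ i s) ∂μ
      ≤ (∫ ω, F.sup' hF (fun s => ∑ i : Fin n,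
        if (i : ℕ) < 0 then ∑ k, Y i k ω * φ i s k else ε i ω * ψ i s) ∂μ) + δ := hstart
    _ ≤ (∫ ω, F.sup' hF (fun s => ∑ i : Fin n,
        if (i : ℕ) < n then ∑ k, Y i k ω * φ i s k else ε i ω * ψ i s) ∂μ) + δ := by
        linarith [hchain n le_rfl]
    _ ≤ (∫ ω, (⨆ s, ∑ i, ∑ k, Y i k ω * φ i s k) ∂μ) + δ := by linarith [hend]
end
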